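/- For all natural numbers γ and m with m ≥ 2γ + 1, one has the identity ω_m²·C_{γγγγ} − 2·ω_γ²·C_{γγmm} = ω_γ·(ω_m² − 2·ω_γ²), and this quantity satisfies ω_m²·C_{γγγγ} − 2·ω_γ²·C_{γγmm} ≥ 2·ω_γ³ ≥ 2; in particular it is strictly positive. -/

import Mathlib

open MeasureTheory Real


/-- Chebyshev polynomials of the second kind, as real-valued functions. -/
noncomputable def chebU : ℕ → ℝ → ℝ
  | 0, _ => 1
  | 1, y => 2 * y
  | n + 2, y => 2 * y * chebU (n + 1) y - chebU n y

theorem chebU_cont : (n : ℕ) → Continuous (chebU n)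
  | 0 => continuous_const
  | 1 => by simpa [chebU] using (continuous_mul_left (2:ℝ))
  | n + 2 => by
      have h1 := chebU_cont (n+1); have h0 := chebU_cont n
      have : (chebU (n+2)) = fun y => 2 * y * chebU (n+1) y - chebU n y := rfl
      rw [this]
      exact ((continuous_const.mul continuous_id).mul h1).sub h0

theorem prod_sum (c θ : ℝ) : 2 * Real.cos θ * Real.sin (c * θ)
    = Real.sin ((c + 1) * θ) + Real.sin ((c - 1) * θ) := by
  have h1 : (c + 1) * θ = c * θ + θ := by ring
  have h2 : (c - 1) * θ = c * θ - θ := by ring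
  rw [h1, h2, Real.sin_add, Real.sin_sub]; ring

theorem chebU_mul_sin : (n : ℕ) → ∀ (b θ : ℝ), chebU n (Real.cos θ) * Real.sin (b * θ) =
    ∑ j ∈ Finset.range (n + 1), Real.sin ((b - n + 2 * j) * θ)
  | 0 => by intro b θ; simp [chebU]
  | 1 => by
      intro b θ
      have : chebU 1 (Real.cos θ) = 2 * Real.cos θ := rfl
      rw [this, prod_sum]
      rw [Finset.sum_range_succ, Finset.sum_range_one]
      push_cast
      ring_nf
  | n + 2 => by
      intro b θ
      set g : ℕ → ℝ := fun j => Real.sin ((b - (n + 2) + 2 * j) * θ) with hg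
      have e1 := chebU_mul_sin (n+1) b θ
      have e0 := chebU_mul_sin n b θ
      have hdef : chebU (n+2) (Real.cos θ)
          = 2 * Real.cos θ * chebU (n+1) (Real.cos θ) - chebU n (Real.cos θ) := rfl
      have hterm : ∀ j ∈ Finset.range (n+2),
          2 * Real.cos θ * Real.sin ((b - (↑(n+1)) + 2 * j) * θ) = g (j+1) + g j := by
        intro j _
        rw [prod_sum]
        simp only [hg]
        push_cast
        ring_nf
      have h2 : ∑ j ∈ Finset.range (n+1), Real.sin ((b - ↑n + 2 * ↑j) * θ)
          = ∑ j ∈ Finset.range (n+1), g (j+1) := by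
        refine Finset.sum_congr rfl fun j _ => ?_
        simp only [hg]; push_cast; ring_nf
      have hgoal : ∑ j ∈ Finset.range (n+2+1), Real.sin ((b - (↑(n+2)) + 2 * ↑j) * θ)
          = ∑ j ∈ Finset.range (n+3), g j := by
        refine Finset.sum_congr rfl fun j _ => ?_
        simp only [hg]; push_cast; ring_nf
      rw [hdef, sub_mul, mul_assoc, e1, e0, Finset.mul_sum, hgoal,
        Finset.sum_congr rfl hterm, Finset.sum_add_distrib, h2]
      have A : ∑ j ∈ Finset.range (n+3), g j = (∑ j ∈ Finset.range (n+2), g (j+1)) + g 0 :=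
        Finset.sum_range_succ' g (n+2)
      have B : ∑ j ∈ Finset.range (n+2), g j = (∑ j ∈ Finset.range (n+1), g (j+1)) + g 0 :=
        Finset.sum_range_succ' g (n+1)
      linarith

theorem chebU_cos_mul_sin : (n : ℕ) → ∀ θ : ℝ,
    chebU n (Real.cos θ) * Real.sin θ = Real.sin ((n + 1) * θ)
  | 0 => by intro θ; simp [chebU]
  | 1 => by
      intro θ
      have : chebU 1 (Real.cos θ) = 2 * Real.cos θ := rfl
      rw [this]
      push_cast
      rw [show ((1:ℝ)+1)*θ = θ + θ by ring, Real.sin_add]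
      ring
  | n + 2 => by
      intro θ
      have hdef : chebU (n+2) (Real.cos θ)
          = 2 * Real.cos θ * chebU (n+1) (Real.cos θ) - chebU n (Real.cos θ) := rfl
      have e1 := chebU_cos_mul_sin (n+1) θ
      have e0 := chebU_cos_mul_sin n θ
      rw [hdef, sub_mul, mul_assoc, e1, e0]
      have hps := prod_sum ((n:ℝ)+2) θ
      push_cast at hps ⊢
      ring_nf at hps ⊢
      linarith [hps]

theorem cosInt (c : ℝ) : IntervalIntegrable (fun x : ℝ => Real.cos (c * x)) volume 0 π :=
  Continuous.intervalIntegrable (by continuity) _ _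

-- integral of cos(k x) over [0, π] for nonzero integer k
theorem integral_cos_int (k : ℤ) (hk : k ≠ 0) :
    ∫ x in (0:ℝ)..π, Real.cos ((k:ℝ) * x) = 0 := by
  have hk' : (k:ℝ) ≠ 0 := Int.cast_ne_zero.mpr hk
  rw [intervalIntegral.integral_comp_mul_left _ hk']
  simp [integral_cos, Real.sin_int_mul_pi]

theorem integral_cos_int' (k : ℤ) :
    ∫ x in (0:ℝ)..π, Real.cos ((k:ℝ) * x) = if k = 0 then π else 0 := by
  by_cases hk : k = 0
  · simp [hk]
  · simp [hk, integral_cos_int k hk]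

theorem sin_orth (p q : ℕ) :
    ∫ x in (0:ℝ)..π, Real.sin (p * x) * Real.sin (q * x)
      = if p = q ∧ p ≠ 0 then π/2 else 0 := by
  have hpt : ∀ x : ℝ, Real.sin (p * x) * Real.sin (q * x)
      = (Real.cos ((((p:ℤ) - q : ℤ):ℝ) * x) - Real.cos ((((p:ℤ) + q : ℤ):ℝ) * x)) / 2 := by
    intro x
    push_cast
    rw [show ((p:ℝ) - q) * x = p*x - q*x by ring, show ((p:ℝ) + q) * x = p*x + q*x by ring,
      Real.cos_sub, Real.cos_add]
    ring
  simp only [hpt]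
  rw [intervalIntegral.integral_div]
  rw [intervalIntegral.integral_sub (cosInt _) (cosInt _)]
  rw [integral_cos_int' ((p:ℤ) - q), integral_cos_int' ((p:ℤ) + q)]
  by_cases h1 : p = q
  · by_cases h2 : p = 0
    · subst h1; simp [h2]
    · have : (p:ℤ) + q ≠ 0 := by
        subst h1; simpa using fun hh => h2 (by exact_mod_cast hh)
      subst h1
      simp [h2, this]
  · have hd : (p:ℤ) - q ≠ 0 := by
      intro hh; exact h1 (by omega)
    have hs : ¬((p:ℤ) + q = 0) ∨ True := Or.inr trivial
    by_cases h3 : (p:ℤ) + q = 0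
    · have hp0 : p = 0 := by omega
      have hq0 : q = 0 := by omega
      exact absurd (hp0.trans hq0.symm) h1
    · simp [hd, h3, h1]

theorem sinC (c : ℝ) : Continuous (fun x : ℝ => Real.sin (c * x)) :=
  Real.continuous_sin.comp (continuous_const.mul continuous_id)

/-- Fourier coefficients of the cubic conformal wave equation on the Einstein cylinder
in spherical symmetry. -/
noncomputable def Ccoef (i j k m : ℕ) : ℝ :=
  (2 / Real.pi) *
    ∫ y in (-1:ℝ)..1, chebU i y * chebU j y * chebU k y * chebU m y * Real.sqrt (1 - y ^ 2)

theorem key_integral (γ b : ℕ) (hb : γ < b) :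
    ∫ x in (0:ℝ)..π, (chebU γ (Real.cos x))^2 * (Real.sin ((b:ℝ) * x))^2
      = ((γ:ℝ) + 1) * π / 2 := by
  have hcast : ∀ j : ℕ, ((b - γ + 2*j : ℕ) : ℝ) = (b:ℝ) - γ + 2*j := by
    intro j
    push_cast [Nat.cast_sub hb.le]
    ring
  have hpt : ∀ x : ℝ, (chebU γ (Real.cos x))^2 * (Real.sin ((b:ℝ)*x))^2
      = ∑ j ∈ Finset.range (γ+1), ∑ k ∈ Finset.range (γ+1),
          Real.sin (((b - γ + 2*j : ℕ):ℝ) * x) * Real.sin (((b - γ + 2*k : ℕ):ℝ) * x) := by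
    intro x
    have h := chebU_mul_sin γ b x
    have h2 : (chebU γ (Real.cos x))^2 * (Real.sin ((b:ℝ)*x))^2
        = (chebU γ (Real.cos x) * Real.sin ((b:ℝ)*x))
          * (chebU γ (Real.cos x) * Real.sin ((b:ℝ)*x)) := by ring
    rw [h2, h, Finset.sum_mul_sum]
    refine Finset.sum_congr rfl fun j _ => Finset.sum_congr rfl fun k _ => ?_
    rw [hcast, hcast]
  simp only [hpt]
  rw [intervalIntegral.integral_finset_sum]
  · have hin : ∀ j ∈ Finset.range (γ+1),
        (∫ x in (0:ℝ)..π, ∑ k ∈ Finset.range (γ+1),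
          Real.sin (((b - γ + 2*j : ℕ):ℝ) * x) * Real.sin (((b - γ + 2*k : ℕ):ℝ) * x)) = π/2 := by
      intro j hj
      rw [intervalIntegral.integral_finset_sum]
      · have hterm : ∀ k ∈ Finset.range (γ+1),
            (∫ x in (0:ℝ)..π, Real.sin (((b - γ + 2*j : ℕ):ℝ) * x)
              * Real.sin (((b - γ + 2*k : ℕ):ℝ) * x))
            = if k = j then π/2 else 0 := by
          intro k hk
          rw [sin_orth]
          by_cases hkj : k = j
          · subst hkj
            simp only [and_iff_right rfl]
            have : b - γ + 2*k ≠ 0 := by omega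
            simp [this]
            intro h1 h2
            exact absurd (by omega : b - γ + 2*k = 0) this
          · have : ¬(b - γ + 2*j = b - γ + 2*k) := by omega
            simp [this, hkj]
            intro h
            exact absurd h.symm hkj
        rw [Finset.sum_congr rfl hterm, Finset.sum_ite_eq' (Finset.range (γ+1))]
        simp [Finset.mem_range.mpr (Finset.mem_range.mp hj)]
      · intro k _
        exact Continuous.intervalIntegrable ((sinC _).mul (sinC _)) _ _
    rw [Finset.sum_congr rfl hin, Finset.sum_const, Finset.card_range]
    ring
  · intro j _
    exact Continuous.intervalIntegrable
      (continuous_finset_sum _ fun k _ => (sinC _).mul (sinC _)) _ _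

theorem integral_sub_cos (g : ℝ → ℝ) (hg : Continuous g) :
    ∫ y in (-1:ℝ)..1, g y = ∫ x in (0:ℝ)..π, Real.sin x * g (Real.cos x) := by
  have h := intervalIntegral.integral_comp_smul_deriv (f := Real.cos)
    (f' := fun x => -Real.sin x) (a := π) (b := 0)
    (fun x _ => Real.hasDerivAt_cos x) (Real.continuous_sin.neg.continuousOn) hg
  rw [Real.cos_pi, Real.cos_zero] at h
  rw [← h, intervalIntegral.integral_symm]
  rw [← intervalIntegral.integral_neg]
  congr 1
  funext x
  simp [smul_eq_mul]

theorem Ccoef_eval (γ m : ℕ) (hm : γ ≤ m) : Ccoef γ γ m m = (γ:ℝ) + 1 := by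
  unfold Ccoef
  rw [integral_sub_cos _ (by
    apply Continuous.mul
    · exact (((chebU_cont γ).mul (chebU_cont γ)).mul (chebU_cont m)).mul (chebU_cont m)
    · exact Real.continuous_sqrt.comp (continuous_const.sub (continuous_pow 2)))]
  have hcongr : ∀ x ∈ Set.uIcc (0:ℝ) π,
      Real.sin x * (chebU γ (Real.cos x) * chebU γ (Real.cos x) * chebU m (Real.cos x)
        * chebU m (Real.cos x) * Real.sqrt (1 - Real.cos x ^ 2))
      = (chebU γ (Real.cos x))^2 * (Real.sin (((m+1:ℕ):ℝ) * x))^2 := by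
    intro x hx
    rw [Set.uIcc_of_le Real.pi_pos.le] at hx
    have hs : Real.sqrt (1 - Real.cos x ^ 2) = Real.sin x := by
      rw [show 1 - Real.cos x ^ 2 = Real.sin x ^ 2 by rw [Real.sin_sq]]
      exact Real.sqrt_sq (Real.sin_nonneg_of_mem_Icc hx)
    rw [hs]
    push_cast
    rw [← chebU_cos_mul_sin m x]
    ring
  rw [intervalIntegral.integral_congr hcongr, key_integral γ (m+1) (by omega)]
  have hπ : Real.pi ≠ 0 := Real.pi_ne_zero
  field_simp

/-- Non-degeneracy quantity for `m ≥ 2γ + 1`: closed formula and positive lower bound. -/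
theorem nondegeneracy_quantity_CW (γ m : ℕ) (h : 2 * γ + 1 ≤ m) :
    ((m:ℝ) + 1) ^ 2 * Ccoef γ γ γ γ - 2 * ((γ:ℝ) + 1) ^ 2 * Ccoef γ γ m m =
        ((γ:ℝ) + 1) * (((m:ℝ) + 1) ^ 2 - 2 * ((γ:ℝ) + 1) ^ 2) ∧
      ((m:ℝ) + 1) ^ 2 * Ccoef γ γ γ γ - 2 * ((γ:ℝ) + 1) ^ 2 * Ccoef γ γ m m ≥
        2 * ((γ:ℝ) + 1) ^ 3 ∧
      2 * ((γ:ℝ) + 1) ^ 3 ≥ 2 ∧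
      0 < ((m:ℝ) + 1) ^ 2 * Ccoef γ γ γ γ - 2 * ((γ:ℝ) + 1) ^ 2 * Ccoef γ γ m m := by
  have h1 : Ccoef γ γ γ γ = (γ:ℝ) + 1 := Ccoef_eval γ γ le_rfl
  have h2 : Ccoef γ γ m m = (γ:ℝ) + 1 := Ccoef_eval γ m (by omega)
  rw [h1, h2]
  have hm : (2 * (γ:ℝ) + 1) ≤ (m:ℝ) := by exact_mod_cast h
  have hγ : (0:ℝ) ≤ (γ:ℝ) := Nat.cast_nonneg γ
  have e2 : ((m:ℝ) + 1) ^ 2 * ((γ:ℝ) + 1) - 2 * ((γ:ℝ) + 1) ^ 2 * ((γ:ℝ) + 1) ≥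
      2 * ((γ:ℝ) + 1) ^ 3 := by
    have key : ((m:ℝ) + 1) ^ 2 ≥ 4 * ((γ:ℝ) + 1) ^ 2 := by nlinarith
    nlinarith [key]
  have e3 : 2 * ((γ:ℝ) + 1) ^ 3 ≥ 2 := by nlinarith
  exact ⟨by ring, e2, e3, by linarith⟩
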